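/- Locality: for every formula ψ of FO(≈), every finite structure 𝔄, every weighted team 𝕏, and every set of variables V with Fr(ψ) ⊆ V ⊆ Dom(𝕏): 𝔄 ⊨^w_𝕏 ψ if and only if 𝔄 ⊨^w_{𝕏↾V} ψ, where 𝕏↾V is the marginal of 𝕏 on V, defined by (𝕏↾V)(t) = Σ{𝕏(s) : s ∈ X, s↾V = t}. -/

import Mathlib

namespace PTS

/-- Syntax of first-order logic (in negation normal form) over a relational
vocabulary `τ` with arities `arR`, extended with marginal identity atoms,
dependence atoms, probabilistic (marginal) independence atoms and inclusion atoms.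
Variables come from the type `V`. -/
inductive PFormula (V : Type) (τ : Type) (arR : τ → ℕ) : Type
  | eq    (x y : V)
  | neq   (x y : V)
  | rel   (R : τ) (ts : Fin (arR R) → V)
  | nrel  (R : τ) (ts : Fin (arR R) → V)
  | marg  (n : ℕ) (xs ys : Fin n → V)
  | dep   (n : ℕ) (xs : Fin n → V) (y : V)
  | indep (m n : ℕ) (xs : Fin m → V) (ys : Fin n → V)
  | incl  (n : ℕ) (xs ys : Fin n → V)
  | and   (φ ψ : PFormula V τ arR)
  | or    (φ ψ : PFormula V τ arR)
  | ex    (x : V) (φ : PFormula V τ arR)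
  | all   (x : V) (φ : PFormula V τ arR)

namespace PFormula

variable {V W τ : Type} {arR : τ → ℕ}

/-- No dependence atoms occur. -/
def noDep : PFormula V τ arR → Prop
  | .dep _ _ _ => False
  | .and φ ψ => noDep φ ∧ noDep ψ
  | .or φ ψ => noDep φ ∧ noDep ψ
  | .ex _ φ => noDep φ
  | .all _ φ => noDep φ
  | _ => True

/-- No probabilistic independence atoms occur. -/
def noIndep : PFormula V τ arR → Prop
  | .indep _ _ _ _ => False
  | .and φ ψ => noIndep φ ∧ noIndep ψ
  | .or φ ψ => noIndep φ ∧ noIndep ψ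
  | .ex _ φ => noIndep φ
  | .all _ φ => noIndep φ
  | _ => True

/-- No inclusion atoms occur. -/
def noIncl : PFormula V τ arR → Prop
  | .incl _ _ _ => False
  | .and φ ψ => noIncl φ ∧ noIncl ψ
  | .or φ ψ => noIncl φ ∧ noIncl ψ
  | .ex _ φ => noIncl φ
  | .all _ φ => noIncl φ
  | _ => True

/-- No marginal identity atoms occur. -/
def noMarg : PFormula V τ arR → Prop
  | .marg _ _ _ => False
  | .and φ ψ => noMarg φ ∧ noMarg ψ
  | .or φ ψ => noMarg φ ∧ noMarg ψ
  | .ex _ φ => noMarg φ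
  | .all _ φ => noMarg φ
  | _ => True

/-- Purely first-order formula (no team atoms at all). -/
def isFO (φ : PFormula V τ arR) : Prop := noDep φ ∧ noIndep φ ∧ noIncl φ ∧ noMarg φ

/-- A formula of probabilistic inclusion logic FO(≈). -/
def isFOmarg (φ : PFormula V τ arR) : Prop := noDep φ ∧ noIndep φ ∧ noIncl φ

/-- A formula of FO(≈, dep(⋯)). -/
def isFOmargdep (φ : PFormula V τ arR) : Prop := noIndep φ ∧ noIncl φ

/-- A formula of inclusion logic FO(⊆). -/
def isFOincl (φ : PFormula V τ arR) : Prop := noDep φ ∧ noIndep φ ∧ noMarg φ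

/-- Free variables of a formula. -/
def freeVars : PFormula V τ arR → Set V
  | .eq x y => {x, y}
  | .neq x y => {x, y}
  | .rel _ ts => Set.range ts
  | .nrel _ ts => Set.range ts
  | .marg _ xs ys => Set.range xs ∪ Set.range ys
  | .dep _ xs y => Set.range xs ∪ {y}
  | .indep _ _ xs ys => Set.range xs ∪ Set.range ys
  | .incl _ xs ys => Set.range xs ∪ Set.range ys
  | .and φ ψ => freeVars φ ∪ freeVars ψ
  | .or φ ψ => freeVars φ ∪ freeVars ψ
  | .ex x φ => freeVars φ \ {x}
  | .all x φ => freeVars φ \ {x}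

/-- Renaming of variables. -/
def rename (f : V → W) : PFormula V τ arR → PFormula W τ arR
  | .eq x y => .eq (f x) (f y)
  | .neq x y => .neq (f x) (f y)
  | .rel R ts => .rel R (fun i => f (ts i))
  | .nrel R ts => .nrel R (fun i => f (ts i))
  | .marg n xs ys => .marg n (fun i => f (xs i)) (fun i => f (ys i))
  | .dep n xs y => .dep n (fun i => f (xs i)) (f y)
  | .indep m n xs ys => .indep m n (fun i => f (xs i)) (fun i => f (ys i))
  | .incl n xs ys => .incl n (fun i => f (xs i)) (fun i => f (ys i))
  | .and φ ψ => .and (rename f φ) (rename f ψ)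
  | .or φ ψ => .or (rename f φ) (rename f ψ)
  | .ex x φ => .ex (f x) (rename f φ)
  | .all x φ => .all (f x) (rename f φ)

end PFormula

section Semantics

variable {V τ : Type} {arR : τ → ℕ} {A : Type}
variable [Fintype V] [DecidableEq V] [Fintype A] [DecidableEq A]

/-- A weighted team: all weights are nonnegative. -/
def NonnegTeam (X : (V → A) → ℝ) : Prop := ∀ s, 0 ≤ X s

/-- Total weight |X| of a weighted team. -/
noncomputable def totalW (X : (V → A) → ℝ) : ℝ := ∑ s, X s

/-- A probabilistic team: a probability distribution on assignments. -/
def IsDist (X : (V → A) → ℝ) : Prop := NonnegTeam X ∧ totalW X = 1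

/-- The marginal weight |X_{x⃗ = a⃗}|. -/
noncomputable def margW (X : (V → A) → ℝ) {n : ℕ} (xs : Fin n → V) (a : Fin n → A) : ℝ :=
  ∑ s : V → A, if (fun i => s (xs i)) = a then X s else 0

/-- The duplicated team X[A/x]: the weight of each assignment is redistributed
uniformly over all values of `x`. -/
noncomputable def dup (x : V) (X : (V → A) → ℝ) : (V → A) → ℝ :=
  fun s => (∑ a : A, X (Function.update s x a)) / (Fintype.card A : ℝ)

/-- `Y` is obtained from `X` by (re)distributing the values of the variable `x`:
the marginals of `X` and `Y` on the variables other than `x` coincide. -/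
def ExtAt (x : V) (X Y : (V → A) → ℝ) : Prop :=
  ∀ s : V → A, (∑ a : A, Y (Function.update s x a)) = ∑ a : A, X (Function.update s x a)

variable (I : ∀ R : τ, (Fin (arR R) → A) → Prop)

/-- Tarski semantics for first-order formulas (team atoms are vacuously true;
they do not occur in first-order formulas). -/
def foSat : PFormula V τ arR → (V → A) → Prop
  | .eq x y, s => s x = s y
  | .neq x y, s => s x ≠ s y
  | .rel R ts, s => I R (fun i => s (ts i))
  | .nrel R ts, s => ¬ I R (fun i => s (ts i))
  | .and φ ψ, s => foSat φ s ∧ foSat ψ s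
  | .or φ ψ, s => foSat φ s ∨ foSat ψ s
  | .ex x φ, s => ∃ a : A, foSat φ (Function.update s x a)
  | .all x φ, s => ∀ a : A, foSat φ (Function.update s x a)
  | _, _ => True

/-- Weighted (probabilistic) team semantics `⊨ʷ`. -/
def wSat : PFormula V τ arR → ((V → A) → ℝ) → Prop
  | .eq x y, X => ∀ s, 0 < X s → s x = s y
  | .neq x y, X => ∀ s, 0 < X s → s x ≠ s y
  | .rel R ts, X => ∀ s, 0 < X s → I R (fun i => s (ts i))
  | .nrel R ts, X => ∀ s, 0 < X s → ¬ I R (fun i => s (ts i))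
  | .marg n xs ys, X => ∀ a : Fin n → A, margW X xs a = margW X ys a
  | .dep _ xs y, X => ∀ s t, 0 < X s → 0 < X t → (∀ i, s (xs i) = t (xs i)) → s y = t y
  | .indep m n xs ys, X => ∀ (a : Fin m → A) (b : Fin n → A),
      (∑ s : V → A, if ((fun i => s (xs i)) = a ∧ (fun i => s (ys i)) = b) then X s else 0)
          * totalW X = margW X xs a * margW X ys b
  | .incl _ xs ys, X => ∀ s, 0 < X s → ∃ t, 0 < X t ∧ ∀ i, s (xs i) = t (ys i)
  | .and φ ψ, X => wSat φ X ∧ wSat ψ X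
  | .or φ ψ, X => ∃ Y Z : (V → A) → ℝ, NonnegTeam Y ∧ NonnegTeam Z ∧
      (∀ s, Y s + Z s = X s) ∧ wSat φ Y ∧ wSat ψ Z
  | .ex x φ, X => ∃ Y : (V → A) → ℝ, NonnegTeam Y ∧ ExtAt x X Y ∧ wSat φ Y
  | .all x φ, X => wSat φ (dup x X)

/-- Probabilistic team semantics `⊨` (on probability distributions). -/
def pSat : PFormula V τ arR → ((V → A) → ℝ) → Prop
  | .eq x y, X => ∀ s, 0 < X s → s x = s y
  | .neq x y, X => ∀ s, 0 < X s → s x ≠ s y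
  | .rel R ts, X => ∀ s, 0 < X s → I R (fun i => s (ts i))
  | .nrel R ts, X => ∀ s, 0 < X s → ¬ I R (fun i => s (ts i))
  | .marg n xs ys, X => ∀ a : Fin n → A, margW X xs a = margW X ys a
  | .dep _ xs y, X => ∀ s t, 0 < X s → 0 < X t → (∀ i, s (xs i) = t (xs i)) → s y = t y
  | .indep m n xs ys, X => ∀ (a : Fin m → A) (b : Fin n → A),
      (∑ s : V → A, if ((fun i => s (xs i)) = a ∧ (fun i => s (ys i)) = b) then X s else 0)
          = margW X xs a * margW X ys b
  | .incl _ xs ys, X => ∀ s, 0 < X s → ∃ t, 0 < X t ∧ ∀ i, s (xs i) = t (ys i)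
  | .and φ ψ, X => pSat φ X ∧ pSat ψ X
  | .or φ ψ, X => ∃ (α : ℝ) (Y Z : (V → A) → ℝ), 0 ≤ α ∧ α ≤ 1 ∧ IsDist Y ∧ IsDist Z ∧
      (∀ s, α * Y s + (1 - α) * Z s = X s) ∧ pSat φ Y ∧ pSat ψ Z
  | .ex x φ, X => ∃ Y : (V → A) → ℝ, IsDist Y ∧ ExtAt x X Y ∧ pSat φ Y
  | .all x φ, X => pSat φ (dup x X)

/-- Relational team semantics (for inclusion logic and other team-based logics). -/
def tSat : PFormula V τ arR → Set (V → A) → Prop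
  | .eq x y, X => ∀ s ∈ X, s x = s y
  | .neq x y, X => ∀ s ∈ X, s x ≠ s y
  | .rel R ts, X => ∀ s ∈ X, I R (fun i => s (ts i))
  | .nrel R ts, X => ∀ s ∈ X, ¬ I R (fun i => s (ts i))
  | .marg _ _ _, _ => True
  | .dep _ xs y, X => ∀ s ∈ X, ∀ t ∈ X, (∀ i, s (xs i) = t (xs i)) → s y = t y
  | .indep _ _ _ _, _ => True
  | .incl _ xs ys, X => ∀ s ∈ X, ∃ t ∈ X, ∀ i, s (xs i) = t (ys i)
  | .and φ ψ, X => tSat φ X ∧ tSat ψ X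
  | .or φ ψ, X => ∃ Y Z : Set (V → A), Y ∪ Z = X ∧ tSat φ Y ∧ tSat ψ Z
  | .ex x φ, X => ∃ F : (V → A) → Set A, (∀ s ∈ X, (F s).Nonempty) ∧
      tSat φ {t | ∃ s ∈ X, ∃ a ∈ F s, t = Function.update s x a}
  | .all x φ, X => tSat φ {t | ∃ s ∈ X, ∃ a : A, t = Function.update s x a}

end Semantics

/-- Marginal (projection) of a weighted team along an injection of variable domains. -/
noncomputable def marginal {W V A : Type} [Fintype V] [DecidableEq V] [Fintype A]
    [Fintype W] [DecidableEq W] [DecidableEq A] (ι : W → V) (X : (V → A) → ℝ) : (W → A) → ℝ :=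
  fun t => ∑ s : V → A, if (fun w => s (ι w)) = t then X s else 0

/-- The canonical (uniform) lift of a weight function on the values of a tuple `xs` of
variables to a weighted team over all assignments. -/
noncomputable def lift {V A : Type} [Fintype V] [DecidableEq V] [Fintype A] {n : ℕ}
    (xs : Fin n → V) (f : (Fin n → A) → ℝ) : (V → A) → ℝ :=
  fun s => f (fun i => s (xs i)) * (Fintype.card A : ℝ) ^ n / (Fintype.card (V → A) : ℝ)

end PTS

namespace PTS
section LocalityHelpers

open Function

variable {W V A : Type} [Fintype W] [DecidableEq W] [Fintype V] [DecidableEq V]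
  [Fintype A] [DecidableEq A]

/-- The flip involution on `(V → A) × A` at coordinate `v`. -/
def flipAt (v : V) : ((V → A) × A) → ((V → A) × A) :=
  fun p => (Function.update p.1 v p.2, p.1 v)

lemma flipAt_involutive (v : V) : Function.Involutive (flipAt (A := A) v) := by
  intro p
  simp [flipAt, Function.update_idem]

/-- Reindexing a double sum by the flip involution. -/
lemma sum_flip (v : V) (G : (V → A) → A → ℝ) :
    ∑ s : V → A, ∑ a : A, G s a
      = ∑ s : V → A, ∑ a : A, G (Function.update s v a) (s v) := by
  rw [← Fintype.sum_prod_type (f := fun p : (V → A) × A => G p.1 p.2),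
    ← Fintype.sum_prod_type (f := fun p : (V → A) × A => G (Function.update p.1 v p.2) (p.1 v))]
  exact (Equiv.sum_comp ((flipAt_involutive (A := A) v).toPerm)
    (fun p : (V → A) × A => G p.1 p.2)).symm

/-- `s` agrees with `t` (through `ι`) off the variable `x`. -/
def agreeOff (ι : W → V) (x : W) (s : V → A) (t : W → A) : Prop :=
  ∀ w, w ≠ x → s (ι w) = t w

instance (ι : W → V) (x : W) (s : V → A) (t : W → A) : Decidable (agreeOff ι x s t) := by
  unfold agreeOff; infer_instance

lemma agreeOff_update_left {ι : W → V} (hι : Function.Injective ι) (x : W)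
    (s : V → A) (a : A) (t : W → A) :
    agreeOff ι x (Function.update s (ι x) a) t ↔ agreeOff ι x s t := by
  unfold agreeOff
  refine forall_congr' fun w => imp_congr_right fun hw => ?_
  rw [Function.update_of_ne (fun h => hw (hι h))]

lemma agreeOff_update_right (ι : W → V) (x : W) (s : V → A) (a : A) (t : W → A) :
    agreeOff ι x s (Function.update t x a) ↔ agreeOff ι x s t := by
  unfold agreeOff
  refine forall_congr' fun w => imp_congr_right fun hw => ?_
  rw [Function.update_of_ne hw]

lemma comp_eq_update_iff {ι : W → V} (hι : Function.Injective ι) (x : W)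
    (s : V → A) (t : W → A) (a : A) :
    (fun w => s (ι w)) = Function.update t x a ↔ (s (ι x) = a ∧ agreeOff ι x s t) := by
  constructor
  · intro h
    constructor
    · have := congrFun h x; simpa using this
    · intro w hw
      have := congrFun h w
      rwa [Function.update_of_ne hw] at this
  · rintro ⟨h1, h2⟩
    funext w
    by_cases hw : w = x
    · subst hw; simpa using h1
    · rw [Function.update_of_ne hw]; exact h2 w hw

lemma comp_update_eq {ι : W → V} (hι : Function.Injective ι) (x : W) (s : V → A) (a : A) :
    (fun w => Function.update s (ι x) a (ι w)) = Function.update (fun w => s (ι w)) x a := by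
  funext w
  by_cases hw : w = x
  · subst hw; simp
  · rw [Function.update_of_ne hw, Function.update_of_ne (fun h => hw (hι h))]

/-- Pushing a predicate through the marginal. -/
lemma sum_marginal (ι : W → V) (X : (V → A) → ℝ) (q : (W → A) → Prop) [DecidablePred q] :
    ∑ t : W → A, (if q t then marginal ι X t else 0)
      = ∑ s : V → A, (if q (fun w => s (ι w)) then X s else 0) := by
  unfold marginal
  have : ∀ t : W → A, (if q t then (∑ s : V → A, if (fun w => s (ι w)) = t then X s else 0) else 0)
      = ∑ s : V → A, if (fun w => s (ι w)) = t then (if q t then X s else 0) else 0 := by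
    intro t; split <;> simp
  simp only [this]
  rw [Finset.sum_comm]
  refine Finset.sum_congr rfl fun s _ => ?_
  have : ∀ t : W → A, (if (fun w => s (ι w)) = t then (if q t then X s else 0) else 0)
      = if (fun w => s (ι w)) = t then (if q (fun w => s (ι w)) then X s else 0) else 0 := by
    intro t; by_cases h : (fun w => s (ι w)) = t
    · subst h; simp
    · simp [h]
  simp only [this]
  simp

lemma margW_marginal (ι : W → V) (X : (V → A) → ℝ) {n : ℕ} (xs : Fin n → W) (a : Fin n → A) :
    margW (marginal ι X) xs a = margW X (fun i => ι (xs i)) a := by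
  unfold margW
  exact sum_marginal ι X (fun t => (fun i => t (xs i)) = a)

lemma marginal_nonneg (ι : W → V) {X : (V → A) → ℝ} (hX : NonnegTeam X) :
    NonnegTeam (marginal ι X) := by
  intro t
  refine Finset.sum_nonneg fun s _ => ?_
  split
  · exact hX s
  · exact le_refl 0

lemma exists_pos_of_marginal_pos (ι : W → V) {X : (V → A) → ℝ} (hX : NonnegTeam X)
    {t : W → A} (ht : 0 < marginal ι X t) :
    ∃ s : V → A, (fun w => s (ι w)) = t ∧ 0 < X s := by
  by_contra h
  push_neg at h
  have : marginal ι X t = 0 := by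
    refine Finset.sum_eq_zero fun s _ => ?_
    split
    · next hs => exact le_antisymm (h s hs) (hX s)
    · rfl
  rw [this] at ht; exact lt_irrefl 0 ht

lemma le_marginal_self (ι : W → V) {X : (V → A) → ℝ} (hX : NonnegTeam X) (s : V → A) :
    X s ≤ marginal ι X (fun w => s (ι w)) := by
  have := Finset.single_le_sum (f := fun s' : V → A =>
      if (fun w => s' (ι w)) = (fun w => s (ι w)) then X s' else 0)
    (fun s' _ => by split; exacts [hX s', le_refl 0]) (Finset.mem_univ s)
  simpa [marginal] using this

lemma marginal_pos_of_pos (ι : W → V) {X : (V → A) → ℝ} (hX : NonnegTeam X)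
    {s : V → A} (hs : 0 < X s) : 0 < marginal ι X (fun w => s (ι w)) :=
  lt_of_lt_of_le hs (le_marginal_self ι hX s)

/-- E1: the `x`-fiber sum of a marginal. -/
lemma sum_marg_update {ι : W → V} (hι : Function.Injective ι) (x : W)
    (F : (V → A) → ℝ) (t : W → A) :
    ∑ a : A, marginal ι F (Function.update t x a)
      = ∑ s : V → A, (if agreeOff ι x s t then F s else 0) := by
  unfold marginal
  rw [Finset.sum_comm]
  refine Finset.sum_congr rfl fun s _ => ?_
  have : ∀ a : A, (if (fun w => s (ι w)) = Function.update t x a then F s else 0)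
      = if s (ι x) = a then (if agreeOff ι x s t then F s else 0) else 0 := by
    intro a
    rw [if_congr (comp_eq_update_iff hι x s t a) rfl rfl]
    by_cases h1 : s (ι x) = a <;> by_cases h2 : agreeOff ι x s t <;> simp [h1, h2]
  simp only [this]
  simp

/-- E2: the fiber sum over `s` with `x`-redistribution. -/
lemma sum_fiber_update {ι : W → V} (hι : Function.Injective ι) (x : W)
    (F : (V → A) → ℝ) (t : W → A) :
    ∑ s : V → A, (if (fun w => s (ι w)) = t then (∑ a : A, F (Function.update s (ι x) a)) else 0)
      = ∑ s : V → A, (if agreeOff ι x s t then F s else 0) := by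
  have h1 : ∀ s : V → A,
      (if (fun w => s (ι w)) = t then (∑ a : A, F (Function.update s (ι x) a)) else 0)
      = ∑ a : A, (if (fun w => s (ι w)) = t then F (Function.update s (ι x) a) else 0) := by
    intro s; split <;> simp
  simp only [h1]
  rw [sum_flip (ι x)
    (fun s a => if (fun w => s (ι w)) = t then F (Function.update s (ι x) a) else 0)]
  have h2 : ∀ (s : V → A) (a : A),
      (if (fun w => Function.update s (ι x) a (ι w)) = t then
          F (Function.update (Function.update s (ι x) a) (ι x) (s (ι x))) else 0)
      = if a = t x then (if agreeOff ι x s t then F s else 0) else 0 := by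
    intro s a
    rw [Function.update_idem, Function.update_eq_self]
    have hc : (fun w => Function.update s (ι x) a (ι w)) = t
        ↔ (a = t x ∧ agreeOff ι x s t) := by
      rw [comp_update_eq hι]
      constructor
      · intro h
        constructor
        · have := congrFun h x; simpa using this
        · intro w hw
          have := congrFun h w
          rwa [Function.update_of_ne hw] at this
      · rintro ⟨ha, hagree⟩
        funext w
        by_cases hw : w = x
        · subst hw; simpa using ha
        · rw [Function.update_of_ne hw]; exact hagree w hw
    rw [if_congr hc rfl rfl]
    by_cases ha : a = t x <;> by_cases hg : agreeOff ι x s t <;> simp [ha, hg]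
  simp only [h2]
  rw [Finset.sum_comm]
  simp

/-- Lemma F: fiber sums against a predicate invariant under updating `v`. -/
lemma sum_fiber_invariant (v : V) (F : (V → A) → ℝ) (P : (V → A) → Prop) [DecidablePred P]
    (hP : ∀ s a, P (Function.update s v a) ↔ P s) :
    ∑ s : V → A, (if P s then (∑ a : A, F (Function.update s v a)) else 0)
      = (Fintype.card A : ℝ) * ∑ s : V → A, (if P s then F s else 0) := by
  have h1 : ∀ s : V → A,
      (if P s then (∑ a : A, F (Function.update s v a)) else 0)
      = ∑ a : A, (if P s then F (Function.update s v a) else 0) := by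
    intro s; split <;> simp
  simp only [h1]
  rw [sum_flip v (fun s a => if P s then F (Function.update s v a) else 0)]
  have h2 : ∀ (s : V → A) (a : A),
      (if P (Function.update s v a) then
          F (Function.update (Function.update s v a) v (s v)) else 0)
      = if P s then F s else 0 := by
    intro s a
    rw [Function.update_idem, Function.update_eq_self, if_congr (hP s a) rfl rfl]
  simp only [h2]
  rw [Finset.mul_sum]
  exact Finset.sum_congr rfl fun s _ => by
    rw [Finset.sum_const, Finset.card_univ, nsmul_eq_mul]

lemma extAt_marginal {ι : W → V} (hι : Function.Injective ι) (x : W)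
    {X Y : (V → A) → ℝ} (hA : (0:ℝ) < Fintype.card A)
    (h : ExtAt (ι x) X Y) : ExtAt x (marginal ι X) (marginal ι Y) := by
  intro t
  rw [sum_marg_update hι x Y t, sum_marg_update hι x X t]
  have hinv : ∀ (s : V → A) (a : A),
      agreeOff ι x (Function.update s (ι x) a) t ↔ agreeOff ι x s t :=
    fun s a => agreeOff_update_left hι x s a t
  have hY := sum_fiber_invariant (ι x) Y (fun s => agreeOff ι x s t) hinv
  have hX := sum_fiber_invariant (ι x) X (fun s => agreeOff ι x s t) hinv
  have hXY : ∀ s : V → A,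
      (if agreeOff ι x s t then (∑ a : A, Y (Function.update s (ι x) a)) else 0)
      = if agreeOff ι x s t then (∑ a : A, X (Function.update s (ι x) a)) else 0 := by
    intro s; rw [h s]
  rw [funext hXY] at hY
  have := hY.symm.trans hX
  exact mul_left_cancel₀ (ne_of_gt hA) this

lemma dup_nonneg (v : V) {X : (V → A) → ℝ} (hX : NonnegTeam X) : NonnegTeam (dup v X) := by
  intro s
  unfold dup
  apply div_nonneg
  · exact Finset.sum_nonneg fun a _ => hX _
  · positivity

lemma marginal_dup {ι : W → V} (hι : Function.Injective ι) (x : W) (X : (V → A) → ℝ) :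
    marginal ι (dup (ι x) X) = dup x (marginal ι X) := by
  funext t
  unfold dup marginal
  have h1 : ∀ s : V → A,
      (if (fun w => s (ι w)) = t then
        (∑ a : A, X (Function.update s (ι x) a)) / (Fintype.card A : ℝ) else 0)
      = (if (fun w => s (ι w)) = t then
        (∑ a : A, X (Function.update s (ι x) a)) else 0) / (Fintype.card A : ℝ) := by
    intro s; split <;> simp
  simp only [h1]
  rw [← Finset.sum_div]
  congr 1
  rw [sum_fiber_update hι x X t, ← sum_marg_update hι x X t]
  rfl

lemma marginal_split (ι : W → V) {X : (V → A) → ℝ} (hX : NonnegTeam X)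
    {Y' Z' : (W → A) → ℝ} (hY' : NonnegTeam Y') (hZ' : NonnegTeam Z')
    (hsum : ∀ t, Y' t + Z' t = marginal ι X t) :
    ∃ Y Z : (V → A) → ℝ, NonnegTeam Y ∧ NonnegTeam Z ∧ (∀ s, Y s + Z s = X s) ∧
      marginal ι Y = Y' ∧ marginal ι Z = Z' := by
  set m : (V → A) → ℝ := fun s => marginal ι X (fun w => s (ι w)) with hm
  refine ⟨fun s => X s * Y' (fun w => s (ι w)) / m s,
          fun s => X s * Z' (fun w => s (ι w)) / m s, ?_, ?_, ?_, ?_, ?_⟩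
  · intro s
    exact div_nonneg (mul_nonneg (hX s) (hY' _)) (marginal_nonneg ι hX _)
  · intro s
    exact div_nonneg (mul_nonneg (hX s) (hZ' _)) (marginal_nonneg ι hX _)
  · intro s
    rw [← add_div, ← mul_add, hsum]
    by_cases h : m s = 0
    · have hXs : X s = 0 := le_antisymm (h ▸ le_marginal_self ι hX s) (hX s)
      simp [hXs]
    · have hms : marginal ι X (fun w => s (ι w)) = m s := rfl
      rw [hms, mul_div_assoc, div_self h, mul_one]
  · funext t
    unfold marginal
    have h1 : ∀ s : V → A,
        (if (fun w => s (ι w)) = t then X s * Y' (fun w => s (ι w)) / m s else 0)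
        = (if (fun w => s (ι w)) = t then X s else 0) * Y' t / marginal ι X t := by
      intro s
      by_cases h : (fun w => s (ι w)) = t
      · simp only [h, if_pos, hm, h]
      · simp [h]
    simp only [h1]
    rw [← Finset.sum_div, ← Finset.sum_mul]
    have h2 : (∑ s : V → A, if (fun w => s (ι w)) = t then X s else 0) = marginal ι X t := rfl
    rw [h2]
    by_cases h : marginal ι X t = 0
    · have : Y' t = 0 := by
        have := hsum t
        rw [h] at this
        have h0 : 0 ≤ Y' t := hY' t
        have h0' : 0 ≤ Z' t := hZ' t
        linarith
      simp [h, this]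
    · rw [mul_comm, mul_div_assoc, div_self h, mul_one]
  · funext t
    unfold marginal
    have h1 : ∀ s : V → A,
        (if (fun w => s (ι w)) = t then X s * Z' (fun w => s (ι w)) / m s else 0)
        = (if (fun w => s (ι w)) = t then X s else 0) * Z' t / marginal ι X t := by
      intro s
      by_cases h : (fun w => s (ι w)) = t
      · simp only [h, if_pos, hm, h]
      · simp [h]
    simp only [h1]
    rw [← Finset.sum_div, ← Finset.sum_mul]
    have h2 : (∑ s : V → A, if (fun w => s (ι w)) = t then X s else 0) = marginal ι X t := rfl
    rw [h2]
    by_cases h : marginal ι X t = 0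
    · have : Z' t = 0 := by
        have := hsum t
        rw [h] at this
        have h0 : 0 ≤ Y' t := hY' t
        have h0' : 0 ≤ Z' t := hZ' t
        linarith
      simp [h, this]
    · rw [mul_comm, mul_div_assoc, div_self h, mul_one]

lemma marginal_ext {ι : W → V} (hι : Function.Injective ι) (x : W)
    {X : (V → A) → ℝ} (hX : NonnegTeam X)
    {Y' : (W → A) → ℝ} (hY' : NonnegTeam Y')
    (hext : ExtAt x (marginal ι X) Y') :
    ∃ Y : (V → A) → ℝ, NonnegTeam Y ∧ ExtAt (ι x) X Y ∧ marginal ι Y = Y' := by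
  classical
  set m : (V → A) → ℝ := fun s => ∑ a : A, X (Function.update s (ι x) a) with hmdef
  set M : (W → A) → ℝ := fun t => ∑ s : V → A, (if agreeOff ι x s t then X s else 0) with hMdef
  have hMnonneg : ∀ t, 0 ≤ M t := by
    intro t
    refine Finset.sum_nonneg fun s _ => ?_
    split; exacts [hX s, le_refl 0]
  -- M as the fiber sum of the marginal
  have hMeq : ∀ t, (∑ a : A, marginal ι X (Function.update t x a)) = M t :=
    fun t => sum_marg_update hι x X t
  -- M is invariant under updating x
  have hMupdate : ∀ t a, M (Function.update t x a) = M t := by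
    intro t a
    refine Finset.sum_congr rfl fun s _ => ?_
    rw [if_congr (agreeOff_update_right ι x s a t) rfl rfl]
  -- Y' fiber sums equal M
  have hY'M : ∀ t, (∑ a : A, Y' (Function.update t x a)) = M t := by
    intro t; rw [hext t, hMeq t]
  -- if M (s∘ι) = 0 then m s = 0
  have hm0 : ∀ s : V → A, M (fun w => s (ι w)) = 0 → m s = 0 := by
    intro s hM0
    have hall : ∀ s' : V → A, agreeOff ι x s' (fun w => s (ι w)) → X s' = 0 := by
      intro s' hs'
      have hz := (Finset.sum_eq_zero_iff_of_nonneg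
        (fun s'' _ => by split; exacts [hX s'', le_refl 0])).mp hM0 s' (Finset.mem_univ s')
      rwa [if_pos hs'] at hz
    refine Finset.sum_eq_zero fun a _ => ?_
    refine hall _ ?_
    intro w hw
    rw [Function.update_of_ne (fun h => hw (hι h))]
  have hY'0 : ∀ t, M t = 0 → Y' t = 0 := by
    intro t hM0
    have := hY'M t
    rw [hM0] at this
    have := (Finset.sum_eq_zero_iff_of_nonneg (fun a _ => hY' _)).mp this (t x) (Finset.mem_univ _)
    rwa [Function.update_eq_self] at this
  refine ⟨fun s => m s * Y' (fun w => s (ι w)) / M (fun w => s (ι w)), ?_, ?_, ?_⟩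
  · intro s
    refine div_nonneg (mul_nonneg ?_ (hY' _)) (hMnonneg _)
    exact Finset.sum_nonneg fun a _ => hX _
  · intro s
    -- LHS: ∑ a, Y (update s (ι x) a); RHS: ∑ a, X (update s (ι x) a) = m s
    have key : ∀ a : A,
        m (Function.update s (ι x) a) * Y' (fun w => Function.update s (ι x) a (ι w))
          / M (fun w => Function.update s (ι x) a (ι w))
        = m s * Y' (Function.update (fun w => s (ι w)) x a) / M (fun w => s (ι w)) := by
      intro a
      have hm' : m (Function.update s (ι x) a) = m s := by
        simp only [hmdef]
        refine Finset.sum_congr rfl fun b _ => ?_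
        rw [Function.update_idem]
      rw [hm', comp_update_eq hι, hMupdate]
    calc ∑ a : A, m (Function.update s (ι x) a) * Y' (fun w => Function.update s (ι x) a (ι w))
            / M (fun w => Function.update s (ι x) a (ι w))
        = ∑ a : A, m s * Y' (Function.update (fun w => s (ι w)) x a) / M (fun w => s (ι w)) := by
          exact Finset.sum_congr rfl fun a _ => key a
      _ = m s * (∑ a : A, Y' (Function.update (fun w => s (ι w)) x a)) / M (fun w => s (ι w)) := by
          rw [← Finset.sum_div, ← Finset.mul_sum]
      _ = ∑ a : A, X (Function.update s (ι x) a) := by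
          rw [hY'M]
          by_cases h : M (fun w => s (ι w)) = 0
          · rw [h, mul_zero, zero_div]
            exact (hm0 s h).symm
          · rw [mul_div_assoc, div_self h, mul_one]
  · funext t
    unfold marginal
    have h1 : ∀ s : V → A,
        (if (fun w => s (ι w)) = t then
            m s * Y' (fun w => s (ι w)) / M (fun w => s (ι w)) else 0)
        = (if (fun w => s (ι w)) = t then m s else 0) * Y' t / M t := by
      intro s
      by_cases h : (fun w => s (ι w)) = t
      · rw [if_pos h, if_pos h, h]
      · simp [h]
    simp only [h1]
    rw [← Finset.sum_div, ← Finset.sum_mul]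
    have h2 : (∑ s : V → A, if (fun w => s (ι w)) = t then m s else 0) = M t := by
      simpa only [hmdef] using sum_fiber_update hι x X t
    rw [h2]
    by_cases h : M t = 0
    · rw [h, div_zero]
      exact (hY'0 t h).symm
    · rw [mul_comm, mul_div_assoc, div_self h, mul_one]

end LocalityHelpers

/-- **Locality.**
For every formula `ψ` of probabilistic inclusion logic FO(≈) whose (free) variables
come from the variable domain `W`, every injection `ι : W → V` of `W` into the
variable domain `V` of the weighted team `X` (so that `Fr(ψ) ⊆ W ⊆ Dom(X)`):
`𝔄 ⊨ʷ_X ψ` iff `𝔄 ⊨ʷ_{X↾W} ψ`, where `X↾W` is the marginal of `X` on `W`. -/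
theorem locality
    (W V τ : Type) [Fintype W] [DecidableEq W] [Fintype V] [DecidableEq V]
    (arR : τ → ℕ)
    (A : Type) [Fintype A] [DecidableEq A] (hA : 2 ≤ Fintype.card A)
    (I : ∀ R : τ, (Fin (arR R) → A) → Prop)
    (ψ : PFormula W τ arR) (hψ : ψ.isFOmarg)
    (ι : W → V) (hι : Function.Injective ι)
    (X : (V → A) → ℝ) (hX : NonnegTeam X) :
    wSat I (ψ.rename ι) X ↔ wSat I ψ (marginal ι X) := by
  classical
  have hcard : (0:ℝ) < Fintype.card A := by
    have h0 : 0 < Fintype.card A := lt_of_lt_of_le (by norm_num) hA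
    exact_mod_cast h0
  induction ψ generalizing X hX with
  | eq x y =>
    simp only [PFormula.rename, wSat]
    constructor
    · intro h t ht
      obtain ⟨s, hs, hpos⟩ := exists_pos_of_marginal_pos ι hX ht
      rw [← congrFun hs x, ← congrFun hs y]
      exact h s hpos
    · intro h s hs
      exact h _ (marginal_pos_of_pos ι hX hs)
  | neq x y =>
    simp only [PFormula.rename, wSat]
    constructor
    · intro h t ht
      obtain ⟨s, hs, hpos⟩ := exists_pos_of_marginal_pos ι hX ht
      rw [← congrFun hs x, ← congrFun hs y]
      exact h s hpos
    · intro h s hs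
      exact h _ (marginal_pos_of_pos ι hX hs)
  | rel R ts =>
    simp only [PFormula.rename, wSat]
    constructor
    · intro h t ht
      obtain ⟨s, hs, hpos⟩ := exists_pos_of_marginal_pos ι hX ht
      have he : (fun i => t (ts i)) = fun i => s (ι (ts i)) := by
        funext i; exact (congrFun hs (ts i)).symm
      rw [he]
      exact h s hpos
    · intro h s hs
      exact h _ (marginal_pos_of_pos ι hX hs)
  | nrel R ts =>
    simp only [PFormula.rename, wSat]
    constructor
    · intro h t ht
      obtain ⟨s, hs, hpos⟩ := exists_pos_of_marginal_pos ι hX ht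
      have he : (fun i => t (ts i)) = fun i => s (ι (ts i)) := by
        funext i; exact (congrFun hs (ts i)).symm
      rw [he]
      exact h s hpos
    · intro h s hs
      exact h _ (marginal_pos_of_pos ι hX hs)
  | marg n xs ys =>
    simp only [PFormula.rename, wSat, margW_marginal]
  | dep n xs y =>
    exact hψ.1.elim
  | indep m n xs ys =>
    exact hψ.2.1.elim
  | incl n xs ys =>
    exact hψ.2.2.elim
  | and φ θ ih1 ih2 =>
    obtain ⟨⟨d1, d2⟩, ⟨i1, i2⟩, ⟨c1, c2⟩⟩ := hψ
    simp only [PFormula.rename, wSat]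
    exact and_congr (ih1 ⟨d1, i1, c1⟩ X hX) (ih2 ⟨d2, i2, c2⟩ X hX)
  | or φ θ ih1 ih2 =>
    obtain ⟨⟨d1, d2⟩, ⟨i1, i2⟩, ⟨c1, c2⟩⟩ := hψ
    simp only [PFormula.rename, wSat]
    constructor
    · rintro ⟨Y, Z, hY, hZ, hYZ, hsY, hsZ⟩
      refine ⟨marginal ι Y, marginal ι Z, marginal_nonneg ι hY, marginal_nonneg ι hZ, ?_,
        (ih1 ⟨d1, i1, c1⟩ Y hY).mp hsY, (ih2 ⟨d2, i2, c2⟩ Z hZ).mp hsZ⟩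
      intro t
      unfold marginal
      rw [← Finset.sum_add_distrib]
      refine Finset.sum_congr rfl fun s _ => ?_
      by_cases h : (fun w => s (ι w)) = t <;> simp [h, hYZ s]
    · rintro ⟨Y', Z', hY', hZ', hYZ', hsY', hsZ'⟩
      obtain ⟨Y, Z, hY, hZ, hsum, hmY, hmZ⟩ := marginal_split ι hX hY' hZ' hYZ'
      exact ⟨Y, Z, hY, hZ, hsum, (ih1 ⟨d1, i1, c1⟩ Y hY).mpr (hmY ▸ hsY'),
        (ih2 ⟨d2, i2, c2⟩ Z hZ).mpr (hmZ ▸ hsZ')⟩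
  | ex x φ ih =>
    obtain ⟨d, i, c⟩ := hψ
    simp only [PFormula.rename, wSat]
    constructor
    · rintro ⟨Y, hYnn, hext, hsat⟩
      exact ⟨marginal ι Y, marginal_nonneg ι hYnn, extAt_marginal hι x hcard hext,
        (ih ⟨d, i, c⟩ Y hYnn).mp hsat⟩
    · rintro ⟨Y', hY'nn, hext, hsat⟩
      obtain ⟨Y, hYnn, hextY, hmarg⟩ := marginal_ext hι x hX hY'nn hext
      exact ⟨Y, hYnn, hextY, (ih ⟨d, i, c⟩ Y hYnn).mpr (hmarg ▸ hsat)⟩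
  | all x φ ih =>
    obtain ⟨d, i, c⟩ := hψ
    simp only [PFormula.rename, wSat]
    rw [← marginal_dup hι x X]
    exact ih ⟨d, i, c⟩ (dup (ι x) X) (dup_nonneg _ hX)

end PTS
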